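/- arXiv:1611.00720 — 2 statements merged into one kernel-verified Lean document; each statement's English description precedes it below -/
import Mathlib

section
/- For integers D, Q, X ≥ 1 and B ∈ ℕ with Q ≤ 2·X^(1/B), the number of integers n with |n| ≤ X such that the truncated divisor count d(n,Q) is at least D is at most C(ε,B) · D^(−B) · Q^ε · X, for every ε > 0. -/
open Finset

set_option maxHeartbeats 1000000

lemma toNat_cast_real (a : ℤ) (h : 0 ≤ a) : ((a.toNat : ℕ) : ℝ) = (a : ℝ) := by
  norm_cast
  omega


lemma aux_add_one_le_exp (t : ℝ) (ht : 0 < t) (a : ℕ) :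
    (a : ℝ) + 1 ≤ max 1 t⁻¹ * Real.exp (t * a) := by
  rcases le_or_gt t 1 with h1 | h1
  · have hmax : max 1 t⁻¹ = t⁻¹ := max_eq_right (one_le_inv_iff₀.mpr ⟨ht, h1⟩)
    rw [hmax]
    have h2 : t * a + 1 ≤ Real.exp (t * a) := Real.add_one_le_exp _
    have h3 : (a : ℝ) + 1 = t⁻¹ * (t * a + t) := by field_simp
    rw [h3]
    have : t * a + t ≤ t * a + 1 := by linarith
    have := this.trans h2
    exact mul_le_mul_of_nonneg_left this (by positivity)
  · have h2 : (a : ℝ) + 1 ≤ Real.exp a := Real.add_one_le_exp _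
    have h3 : Real.exp (a : ℝ) ≤ Real.exp (t * a) := by
      apply Real.exp_le_exp.mpr
      nlinarith [Nat.cast_nonneg (α := ℝ) a]
    calc (a:ℝ)+1 ≤ Real.exp (t*a) := h2.trans h3
      _ ≤ max 1 t⁻¹ * Real.exp (t*a) := by
          nlinarith [Real.exp_pos (t*a), le_max_left (1:ℝ) t⁻¹]

lemma factor_bound (δ : ℝ) (hδ : 0 < δ) (p a : ℕ) (hp : 2 ≤ p) :
    (a : ℝ) + 1 ≤ (if (p:ℝ) < (2:ℝ) ^ (δ⁻¹) then max 1 (δ * Real.log 2)⁻¹ else 1)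
      * ((p:ℝ) ^ (δ * a)) := by
  have hp0 : (0:ℝ) < p := by positivity
  have hp2 : (2:ℝ) ≤ (p:ℝ) := by exact_mod_cast hp
  split_ifs with hsm
  · -- small prime: a+1 ≤ c * exp(t0 * a) = c * 2^(δ a) ≤ c * p^(δ a)
    have ht0 : 0 < δ * Real.log 2 := by positivity
    have h1 := aux_add_one_le_exp (δ * Real.log 2) ht0 a
    have h2 : Real.exp (δ * Real.log 2 * a) = (2:ℝ) ^ (δ * a) := by
      rw [Real.rpow_def_of_pos (by norm_num)]; ring_nf
    have h3 : (2:ℝ) ^ (δ * a) ≤ (p:ℝ) ^ (δ * a) :=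
      Real.rpow_le_rpow (by norm_num) hp2 (by positivity)
    calc (a:ℝ) + 1 ≤ max 1 (δ * Real.log 2)⁻¹ * Real.exp (δ * Real.log 2 * a) := h1
      _ = max 1 (δ * Real.log 2)⁻¹ * (2:ℝ) ^ (δ * a) := by rw [h2]
      _ ≤ _ := by
          apply mul_le_mul_of_nonneg_left h3
          exact le_trans (by norm_num) (le_max_left _ _)
  · -- large prime: 2 ≤ p^δ, so a+1 ≤ 2^a ≤ (p^δ)^a
    push_neg at hsm
    have h2 : (2:ℝ) ≤ (p:ℝ) ^ δ := by
      have h := Real.rpow_le_rpow (by positivity) hsm hδ.le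
      rwa [← Real.rpow_mul (by norm_num), inv_mul_cancel₀ hδ.ne', Real.rpow_one] at h
    have ha : (a:ℝ) + 1 ≤ (2:ℝ) ^ (a:ℕ) := by
      exact_mod_cast Nat.succ_le_of_lt (Nat.lt_two_pow_self (n := a))
    have h3 : (2:ℝ) ^ (a:ℕ) ≤ ((p:ℝ) ^ δ) ^ (a:ℕ) :=
      pow_le_pow_left₀ (by norm_num) h2 a
    have h4 : ((p:ℝ) ^ δ) ^ (a:ℕ) = (p:ℝ) ^ (δ * a) := by
      rw [← Real.rpow_natCast ((p:ℝ)^δ) a, ← Real.rpow_mul hp0.le]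
    rw [one_mul, ← h4]
    exact ha.trans h3


lemma divisor_bound (δ : ℝ) (hδ : 0 < δ) :
    ∃ C : ℝ, 1 ≤ C ∧ ∀ m : ℕ, m ≠ 0 → (m.divisors.card : ℝ) ≤ C * (m : ℝ) ^ δ := by
  set c : ℝ := max 1 (δ * Real.log 2)⁻¹ with hcdef
  have hc1 : 1 ≤ c := le_max_left _ _
  set K : ℕ := ⌈(2:ℝ) ^ (δ⁻¹)⌉₊ with hKdef
  refine ⟨c ^ K, one_le_pow₀ hc1, ?_⟩
  intro m hm
  have hd : (m.divisors.card : ℝ) = ∏ p ∈ m.primeFactors, ((m.factorization p : ℝ) + 1) := by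
    rw [Nat.card_divisors hm]
    push_cast
    rfl
  have hstep : ∀ p ∈ m.primeFactors,
      ((m.factorization p : ℝ) + 1) ≤
        (if (p:ℝ) < (2:ℝ) ^ (δ⁻¹) then c else 1) * ((p:ℝ) ^ (δ * (m.factorization p))) := by
    intro p hp
    exact factor_bound δ hδ p _ (Nat.Prime.two_le (Nat.prime_of_mem_primeFactors hp))
  have h1 : (m.divisors.card : ℝ) ≤
      ∏ p ∈ m.primeFactors, ((if (p:ℝ) < (2:ℝ) ^ (δ⁻¹) then c else 1)
        * ((p:ℝ) ^ (δ * (m.factorization p)))) := by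
    rw [hd]
    apply Finset.prod_le_prod (fun p _ => by positivity) hstep
  rw [Finset.prod_mul_distrib] at h1
  have h2 : ∏ p ∈ m.primeFactors, (if (p:ℝ) < (2:ℝ) ^ (δ⁻¹) then c else 1) ≤ c ^ K := by
    rw [Finset.prod_ite, Finset.prod_const, Finset.prod_const, one_pow, mul_one]
    apply pow_le_pow_right₀ hc1
    calc (m.primeFactors.filter (fun p : ℕ => (p:ℝ) < (2:ℝ) ^ (δ⁻¹))).card
        ≤ (Finset.range K).card := by
          apply Finset.card_le_card
          intro p hp
          simp only [Finset.mem_filter] at hp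
          simp only [Finset.mem_range]
          have : (p:ℝ) < (K:ℝ) := lt_of_lt_of_le hp.2 (Nat.le_ceil _)
          exact_mod_cast this
      _ = K := Finset.card_range K
  have h3 : ∏ p ∈ m.primeFactors, (p:ℝ) ^ (δ * (m.factorization p)) = (m:ℝ) ^ δ := by
    have e1 : ∀ p ∈ m.primeFactors, (p:ℝ) ^ (δ * (m.factorization p))
        = ((p ^ (m.factorization p) : ℕ) : ℝ) ^ δ := by
      intro p hp
      have hp0 : (0:ℝ) ≤ (p:ℝ) := by positivity
      push_cast
      rw [← Real.rpow_natCast ((p:ℝ)) (m.factorization p), ← Real.rpow_mul hp0, mul_comm]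
    rw [Finset.prod_congr rfl e1, Real.finset_prod_rpow _ _ (fun p _ => by positivity)]
    congr 1
    rw [← Nat.cast_prod]
    congr 1
    conv_rhs => rw [← Nat.factorization_prod_pow_eq_self hm]
    rw [Nat.prod_factorization_eq_prod_primeFactors]
  calc (m.divisors.card : ℝ) ≤ _ := h1
    _ ≤ c ^ K * (m:ℝ) ^ δ := by
        rw [h3]
        apply mul_le_mul_of_nonneg_right h2 (by positivity)


lemma count_mult (X L : ℤ) (hX : 0 ≤ X) (hL : 0 < L) :
    ((((Finset.Icc (-X) X)).filter (fun n => L ∣ n)).card : ℝ) ≤ 2 * X / L + 1 := by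
  have hLne : L ≠ 0 := hL.ne'
  have hmaps : ∀ n ∈ (Finset.Icc (-X) X).filter (fun n => L ∣ n),
      n / L ∈ Finset.Icc (-(X/L)) (X/L) := by
    intro n hn
    simp only [Finset.mem_filter, Finset.mem_Icc] at hn ⊢
    obtain ⟨⟨h1, h2⟩, k, rfl⟩ := hn
    rw [Int.mul_ediv_cancel_left _ hLne]
    constructor
    · rw [neg_le, Int.le_ediv_iff_mul_le hL]
      have e : -k * L = -(L * k) := by ring
      linarith [h1]
    · rw [Int.le_ediv_iff_mul_le hL]
      have e : k * L = L * k := by ring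
      linarith [h2]
  have hinj : Set.InjOn (· / L) ((Finset.Icc (-X) X).filter (fun n => L ∣ n)) := by
    intro a ha b hb hab
    simp only [Finset.coe_filter, Set.mem_setOf_eq, Finset.mem_Icc] at ha hb
    obtain ⟨-, k, rfl⟩ := ha
    obtain ⟨-, k', rfl⟩ := hb
    simp only [Int.mul_ediv_cancel_left _ hLne] at hab
    rw [hab]
  have hcard := Finset.card_le_card_of_injOn _ hmaps hinj
  have hc : (Finset.Icc (-(X/L)) (X/L)).card = (2 * (X/L) + 1).toNat := by
    rw [Int.card_Icc]
    congr 1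
    ring
  have hnn : 0 ≤ X / L := Int.ediv_nonneg hX hL.le
  have hre : ((X / L : ℤ) : ℝ) ≤ (X:ℝ) / (L:ℝ) := by
    rw [le_div_iff₀ (by exact_mod_cast hL)]
    exact_mod_cast Int.ediv_mul_le X hLne
  calc (((Finset.Icc (-X) X).filter (fun n => L ∣ n)).card : ℝ)
      ≤ ((Finset.Icc (-(X/L)) (X/L)).card : ℝ) := by exact_mod_cast hcard
    _ = ((2 * (X/L) + 1 : ℤ) : ℝ) := by rw [hc]; exact_mod_cast Int.toNat_of_nonneg (show (0:ℤ) ≤ 2*(X/L)+1 by omega)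
    _ ≤ 2 * X / L + 1 := by push_cast; rw [mul_div_assoc]; linarith

/-- Truncated divisor bound: the number of `|n| ≤ X` with `d(n,Q) ≥ D` is
`≲_{ε,B} D^{-B} Q^ε X`, provided `Q ≤ 2 X^{1/B}`. -/

theorem stmt_0 (B : ℕ) (ε : ℝ) (hε : 0 < ε) :
    ∃ C : ℝ, 0 < C ∧ ∀ D Q X : ℕ, 1 ≤ D → 1 ≤ Q → 1 ≤ X →
      (Q : ℝ) ≤ 2 * (X : ℝ) ^ ((1 : ℝ) / B) →
      ((((Finset.Icc (-(X : ℤ)) (X : ℤ)).filter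
          (fun n => D ≤ ((Finset.Icc (1 : ℤ) (Q : ℤ)).filter (fun d => d ∣ n)).card)).card : ℝ))
        ≤ C * (D : ℝ) ^ (-(B : ℝ)) * (Q : ℝ) ^ ε * (X : ℝ) := by
  rcases Nat.eq_zero_or_pos B with hB0 | hBpos
  · -- B = 0 : trivial bound with C = 3
    subst hB0
    refine ⟨3, by norm_num, fun D Q X hD hQ hX hQX => ?_⟩
    have h1 : ((((Finset.Icc (-(X:ℤ)) (X:ℤ)).filter
          (fun n => D ≤ ((Finset.Icc (1 : ℤ) (Q : ℤ)).filter (fun d => d ∣ n)).card)).card : ℝ))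
        ≤ ((Finset.Icc (-(X:ℤ)) (X:ℤ)).card : ℝ) := by
      exact_mod_cast Finset.card_le_card (Finset.filter_subset _ _)
    have h2 : ((Finset.Icc (-(X:ℤ)) (X:ℤ)).card : ℝ) = 2 * X + 1 := by
      rw [Int.card_Icc]
      have : ((X:ℤ) + 1 - -(X:ℤ)) = 2 * X + 1 := by ring
      rw [this]
      rw [toNat_cast_real _ (by positivity)]
      push_cast; ring
    have hQε : (1:ℝ) ≤ (Q:ℝ) ^ ε := Real.one_le_rpow (by exact_mod_cast hQ) hε.le
    have hD0 : (D:ℝ) ^ (-((0:ℕ):ℝ)) = 1 := by norm_num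
    rw [hD0]
    have hX1 : (1:ℝ) ≤ (X:ℝ) := by exact_mod_cast hX
    calc _ ≤ (2 * (X:ℝ) + 1) := h1.trans_eq h2
      _ ≤ 3 * (X:ℝ) := by linarith
      _ ≤ 3 * 1 * (Q:ℝ)^ε * X := by nlinarith
  · -- B ≥ 1
    have hBne : B ≠ 0 := hBpos.ne'
    have hBR : (0:ℝ) < B := by exact_mod_cast hBpos
    set δ : ℝ := ε / (2 * (B:ℝ)^2) with hδdef
    have hδ : 0 < δ := by positivity
    obtain ⟨Cd, hCd1, hCd⟩ := divisor_bound δ hδ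
    have hCd0 : (0:ℝ) < Cd := lt_of_lt_of_le one_pos hCd1
    refine ⟨3 + 2^B + 2 * Cd^B * (1 + 2*B/ε), by positivity, fun D Q X hD hQ hX hQX => ?_⟩
    set T : Finset ℤ := Finset.Icc (1:ℤ) (Q:ℤ) with hT
    set S : Finset ℤ := Finset.Icc (-(X:ℤ)) (X:ℤ) with hS
    set P := Fintype.piFinset (fun _ : Fin B => T) with hP
    set N : ℕ := Q ^ B with hN
    have hQ1 : (1:ℝ) ≤ Q := by exact_mod_cast hQ
    have hQpos : (0:ℝ) < Q := by linarith
    have hX1 : (1:ℝ) ≤ X := by exact_mod_cast hX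
    have hN1 : 1 ≤ N := Nat.one_le_pow _ _ hQ
    have hPmem : ∀ p ∈ P, ∀ i, 1 ≤ p i ∧ p i ≤ (Q:ℤ) := by
      intro p hp i
      have := Fintype.mem_piFinset.mp hp i
      simpa [hT, Finset.mem_Icc] using this
    -- lcm facts
    have hlcm : ∀ p ∈ P, 1 ≤ Finset.univ.lcm p ∧ Finset.univ.lcm p ≤ (N:ℤ) ∧
        ∀ n : ℤ, (Finset.univ.lcm p ∣ n ↔ ∀ i, p i ∣ n) := by
      intro p hp
      have hdvdprod : Finset.univ.lcm p ∣ ∏ i, p i :=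
        Finset.lcm_dvd (fun i _ => Finset.dvd_prod_of_mem p (Finset.mem_univ i))
      have hprodpos : 0 < ∏ i, p i :=
        Finset.prod_pos (fun i _ => lt_of_lt_of_le zero_lt_one (hPmem p hp i).1)
      have hne : Finset.univ.lcm p ≠ 0 := by
        intro h0
        rw [h0] at hdvdprod
        exact absurd (zero_dvd_iff.mp hdvdprod) (by omega)
      have hnonneg : 0 ≤ Finset.univ.lcm p :=
        Int.nonneg_of_normalize_eq_self Finset.normalize_lcm
      have h1 : 1 ≤ Finset.univ.lcm p := by omega
      have hle : Finset.univ.lcm p ≤ ∏ i, p i := Int.le_of_dvd hprodpos hdvdprod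
      have hprodle : (∏ i, p i) ≤ (N:ℤ) := by
        calc (∏ i, p i) ≤ ∏ _i : Fin B, (Q:ℤ) :=
              Finset.prod_le_prod (fun i _ => by linarith [(hPmem p hp i).1])
                (fun i _ => (hPmem p hp i).2)
          _ = (Q:ℤ)^B := by rw [Finset.prod_const, Finset.card_univ, Fintype.card_fin]
          _ = (N:ℤ) := by rw [hN]; push_cast; ring
      refine ⟨h1, le_trans hle hprodle, fun n => ⟨fun h i => dvd_trans (Finset.dvd_lcm (Finset.mem_univ i)) h,
        fun h => Finset.lcm_dvd (fun i _ => h i)⟩⟩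
    -- expansion
    have hexp : ∀ n : ℤ, ((T.filter (fun d => d ∣ n)).card : ℝ) ^ B
        = ∑ p ∈ P, (if Finset.univ.lcm p ∣ n then (1:ℝ) else 0) := by
      intro n
      rw [Finset.natCast_card_filter, Finset.sum_pow']
      apply Finset.sum_congr rfl
      intro p hp
      rw [Fintype.prod_boole]
      by_cases h : Finset.univ.lcm p ∣ n
      · simp [h, ((hlcm p hp).2.2 n).mp h]
      · have h2 : ¬ ∀ i, p i ∣ n := fun hh => h (((hlcm p hp).2.2 n).mpr hh)
        simp [h, h2]
    set M : ℝ := ∑ n ∈ S, ((T.filter (fun d => d ∣ n)).card : ℝ) ^ B with hM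
    have hMswap : M = ∑ p ∈ P, ((S.filter (fun n => Finset.univ.lcm p ∣ n)).card : ℝ) := by
      rw [hM, Finset.sum_congr rfl (fun n _ => hexp n), Finset.sum_comm]
      exact Finset.sum_congr rfl (fun p _ => (Finset.natCast_card_filter _ _).symm)
    -- step 1
    set A := S.filter (fun n => D ≤ ((T.filter (fun d => d ∣ n)).card)) with hA
    have hstep1 : (A.card : ℝ) * (D:ℝ)^B ≤ M := by
      have h1 : (A.card : ℝ) * (D:ℝ)^B = ∑ _n ∈ A, (D:ℝ)^B := by
        rw [Finset.sum_const, nsmul_eq_mul]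
      rw [h1, hM]
      calc ∑ n ∈ A, (D:ℝ)^B ≤ ∑ n ∈ A, ((T.filter (fun d => d ∣ n)).card : ℝ)^B := by
            apply Finset.sum_le_sum
            intro n hn
            have h2 := (Finset.mem_filter.mp hn).2
            have hcast : (D:ℝ) ≤ ((T.filter (fun d => d ∣ n)).card : ℝ) := by exact_mod_cast h2
            exact pow_le_pow_left₀ (by positivity) hcast B
        _ ≤ _ := Finset.sum_le_sum_of_subset_of_nonneg (Finset.filter_subset _ _)
              (fun n _ _ => by positivity)
    -- counting multiples
    have hcount : ∀ p ∈ P, ((S.filter (fun n => Finset.univ.lcm p ∣ n)).card : ℝ)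
        ≤ 2 * (X:ℝ) * (((Finset.univ.lcm p).toNat : ℝ))⁻¹ + 1 := by
      intro p hp
      obtain ⟨h1, h2, -⟩ := hlcm p hp
      have hc := count_mult ((X:ℕ):ℤ) (Finset.univ.lcm p) (by positivity) (by omega)
      rw [toNat_cast_real _ (by omega)]
      calc ((S.filter (fun n => Finset.univ.lcm p ∣ n)).card : ℝ)
          ≤ 2 * ((X:ℤ):ℝ) / ((Finset.univ.lcm p : ℤ):ℝ) + 1 := hc
        _ = 2 * (X:ℝ) * (((Finset.univ.lcm p : ℤ):ℝ))⁻¹ + 1 := by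
            rw [div_eq_mul_inv]; push_cast; ring
    have hcardP : ((P.card : ℕ) : ℝ) = (Q:ℝ)^B := by
      rw [hP, Fintype.card_piFinset]
      rw [Finset.prod_const, Finset.card_univ, Fintype.card_fin]
      rw [hT, Int.card_Icc]
      push_cast [show ((Q:ℤ) + 1 - 1).toNat = Q by omega]
      ring
    have hstep2 : M ≤ 2 * (X:ℝ) * (∑ p ∈ P, (((Finset.univ.lcm p).toNat : ℝ))⁻¹) + (Q:ℝ)^B := by
      rw [hMswap]
      calc ∑ p ∈ P, ((S.filter (fun n => Finset.univ.lcm p ∣ n)).card : ℝ)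
          ≤ ∑ p ∈ P, (2 * (X:ℝ) * (((Finset.univ.lcm p).toNat : ℝ))⁻¹ + 1) :=
            Finset.sum_le_sum hcount
        _ = 2 * (X:ℝ) * (∑ p ∈ P, (((Finset.univ.lcm p).toNat : ℝ))⁻¹) + (Q:ℝ)^B := by
            rw [Finset.sum_add_distrib, Finset.sum_const, nsmul_eq_mul, mul_one,
              Finset.mul_sum, hcardP]
    -- fibering
    have hfiber : (∑ p ∈ P, (((Finset.univ.lcm p).toNat : ℝ))⁻¹)
        ≤ ∑ k ∈ Finset.Icc 1 N, ((k.divisors.card : ℝ))^B / k := by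
      have hmaps : ∀ p ∈ P, (Finset.univ.lcm p).toNat ∈ Finset.Icc 1 N := by
        intro p hp
        obtain ⟨h1, h2, -⟩ := hlcm p hp
        simp only [Finset.mem_Icc]
        omega
      rw [← Finset.sum_fiberwise_of_maps_to hmaps]
      apply Finset.sum_le_sum
      intro k hk
      obtain ⟨hk1, hkN⟩ := Finset.mem_Icc.mp hk
      have hkR : (0:ℝ) < k := by exact_mod_cast hk1
      have hconst : ∀ p ∈ P.filter (fun p => (Finset.univ.lcm p).toNat = k),
          (((Finset.univ.lcm p).toNat : ℝ))⁻¹ = ((k:ℕ):ℝ)⁻¹ := by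
        intro p hp
        rw [(Finset.mem_filter.mp hp).2]
      rw [Finset.sum_congr rfl hconst, Finset.sum_const, nsmul_eq_mul, div_eq_mul_inv]
      apply mul_le_mul_of_nonneg_right _ (by positivity)
      -- fiber card bound
      have hsub : P.filter (fun p => (Finset.univ.lcm p).toNat = k) ⊆
          Fintype.piFinset (fun _ : Fin B =>
            (Finset.Icc (1:ℤ) (k:ℤ)).filter (fun d => d ∣ (k:ℤ))) := by
        intro p hp
        obtain ⟨hpP, hpk⟩ := Finset.mem_filter.mp hp
        obtain ⟨h1, h2, -⟩ := hlcm p hpP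
        rw [Fintype.mem_piFinset]
        intro i
        have hlk : Finset.univ.lcm p = (k:ℤ) := by omega
        have hdvd : p i ∣ (k:ℤ) := hlk ▸ Finset.dvd_lcm (Finset.mem_univ i)
        have hpi1 : 1 ≤ p i := (hPmem p hpP i).1
        have hpik : p i ≤ (k:ℤ) := Int.le_of_dvd (by exact_mod_cast hk1) hdvd
        simp only [Finset.mem_filter, Finset.mem_Icc]
        exact ⟨⟨hpi1, hpik⟩, hdvd⟩
      have hcard := Finset.card_le_card hsub
      have hpi : (Fintype.piFinset (fun _ : Fin B =>
            (Finset.Icc (1:ℤ) (k:ℤ)).filter (fun d => d ∣ (k:ℤ)))).card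
          = ((Finset.Icc (1:ℤ) (k:ℤ)).filter (fun d => d ∣ (k:ℤ))).card ^ B := by
        rw [Fintype.card_piFinset, Finset.prod_const, Finset.card_univ, Fintype.card_fin]
      have hdiv : ((Finset.Icc (1:ℤ) (k:ℤ)).filter (fun d => d ∣ (k:ℤ))).card ≤
          k.divisors.card := by
        apply Finset.card_le_card_of_injOn (fun d => d.toNat)
        · intro d hd
          simp only [Finset.coe_filter, Set.mem_setOf_eq, Finset.mem_coe, Finset.mem_filter, Finset.mem_Icc] at hd
          simp only [Finset.mem_coe, Nat.mem_divisors]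
          refine ⟨?_, by omega⟩
          have he : ((d.toNat : ℕ) : ℤ) = d := Int.toNat_of_nonneg (by omega)
          have h3 : ((d.toNat : ℕ) : ℤ) ∣ ((k:ℕ):ℤ) := he ▸ hd.2
          exact_mod_cast h3
        · intro a ha b hb hab
          simp only [Finset.coe_filter, Set.mem_setOf_eq, Finset.mem_Icc] at ha hb
          simp only at hab
          omega
      calc ((P.filter (fun p => (Finset.univ.lcm p).toNat = k)).card : ℝ)
          ≤ ((k.divisors.card ^ B : ℕ) : ℝ) := by
            exact_mod_cast hcard.trans (hpi ▸ Nat.pow_le_pow_left hdiv B)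
        _ = ((k.divisors.card : ℝ))^B := by push_cast; ring
    -- sum over k
    have hharm : (∑ k ∈ Finset.Icc 1 N, ((k:ℕ):ℝ)⁻¹) ≤ 1 + Real.log N := by
      have h1 := harmonic_le_one_add_log N
      have he : ((harmonic N : ℚ) : ℝ) = ∑ k ∈ Finset.Icc 1 N, ((k:ℕ):ℝ)⁻¹ := by
        rw [harmonic_eq_sum_Icc]
        push_cast
        rfl
      linarith [he ▸ h1]
    have hstep3 : (∑ k ∈ Finset.Icc 1 N, ((k.divisors.card : ℝ))^B / k)
        ≤ Cd^B * (N:ℝ)^(δ*B) * (1 + Real.log N) := by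
      have hterm : ∀ k ∈ Finset.Icc 1 N,
          ((k.divisors.card : ℝ))^B / k ≤ Cd^B * (N:ℝ)^(δ*B) * ((k:ℕ):ℝ)⁻¹ := by
        intro k hk
        obtain ⟨hk1, hkN⟩ := Finset.mem_Icc.mp hk
        have hkR : (0:ℝ) < k := by exact_mod_cast hk1
        have h1 : (k.divisors.card : ℝ) ≤ Cd * (k:ℝ)^δ := hCd k (by omega)
        have h2 : ((k.divisors.card : ℝ))^B ≤ (Cd * (k:ℝ)^δ)^B :=
          pow_le_pow_left₀ (by positivity) h1 B
        have h4 : ((k:ℝ)^δ)^(B:ℕ) = (k:ℝ)^(δ*(B:ℝ)) := by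
          rw [← Real.rpow_natCast ((k:ℝ)^δ) B, ← Real.rpow_mul (by positivity)]
        have h5 : (k:ℝ)^(δ*(B:ℝ)) ≤ (N:ℝ)^(δ*(B:ℝ)) :=
          Real.rpow_le_rpow (by positivity) (by exact_mod_cast hkN) (by positivity)
        rw [div_eq_mul_inv]
        apply mul_le_mul_of_nonneg_right _ (by positivity)
        calc ((k.divisors.card : ℝ))^B ≤ (Cd * (k:ℝ)^δ)^B := h2
          _ = Cd^B * ((k:ℝ)^δ)^B := mul_pow _ _ _
          _ = Cd^B * (k:ℝ)^(δ*(B:ℝ)) := by rw [h4]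
          _ ≤ Cd^B * (N:ℝ)^(δ*(B:ℝ)) := by
              exact mul_le_mul_of_nonneg_left h5 (by positivity)
      calc (∑ k ∈ Finset.Icc 1 N, ((k.divisors.card : ℝ))^B / k)
          ≤ ∑ k ∈ Finset.Icc 1 N, Cd^B * (N:ℝ)^(δ*B) * ((k:ℕ):ℝ)⁻¹ :=
            Finset.sum_le_sum hterm
        _ = Cd^B * (N:ℝ)^(δ*B) * ∑ k ∈ Finset.Icc 1 N, ((k:ℕ):ℝ)⁻¹ := by
            rw [Finset.mul_sum]
        _ ≤ Cd^B * (N:ℝ)^(δ*B) * (1 + Real.log N) := by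
            exact mul_le_mul_of_nonneg_left hharm (by positivity)
    -- analytic simplifications
    have hNcast : (N:ℝ) = (Q:ℝ)^(B:ℕ) := by rw [hN]; push_cast; ring
    have hNδ : (N:ℝ)^(δ*(B:ℝ)) = (Q:ℝ)^(ε/2) := by
      rw [hNcast, ← Real.rpow_natCast (Q:ℝ) B, ← Real.rpow_mul (by positivity)]
      congr 1
      rw [hδdef]
      field_simp
    have hlogN : Real.log N = (B:ℝ) * Real.log Q := by
      rw [hNcast, Real.log_pow]
    have hQhalf : (1:ℝ) ≤ (Q:ℝ)^(ε/2) := Real.one_le_rpow hQ1 (by positivity)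
    have hlogQ : Real.log Q ≤ (2/ε) * (Q:ℝ)^(ε/2) := by
      have h1 := Real.log_le_sub_one_of_pos (show (0:ℝ) < (Q:ℝ)^(ε/2) by positivity)
      have h2 : Real.log ((Q:ℝ)^(ε/2)) = (ε/2) * Real.log Q := Real.log_rpow hQpos _
      rw [h2] at h1
      have h3 : (ε/2) * Real.log Q ≤ (Q:ℝ)^(ε/2) := by linarith
      calc Real.log Q = (2/ε) * ((ε/2) * Real.log Q) := by field_simp
        _ ≤ (2/ε) * (Q:ℝ)^(ε/2) := by
            apply mul_le_mul_of_nonneg_left h3 (by positivity)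
    have hlogbound : 1 + Real.log N ≤ (1 + 2*(B:ℝ)/ε) * (Q:ℝ)^(ε/2) := by
      rw [hlogN]
      have h1 : (B:ℝ) * Real.log Q ≤ (B:ℝ) * ((2/ε) * (Q:ℝ)^(ε/2)) :=
        mul_le_mul_of_nonneg_left hlogQ (by positivity)
      have h2 : (1 + 2*(B:ℝ)/ε) * (Q:ℝ)^(ε/2)
          = (Q:ℝ)^(ε/2) + (B:ℝ)*((2/ε) * (Q:ℝ)^(ε/2)) := by ring
      rw [h2]
      linarith [h1, hQhalf]
    have hQB : (Q:ℝ)^(B:ℕ) ≤ 2^B * (X:ℝ) := by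
      have h1 : (Q:ℝ)^(B:ℕ) ≤ (2 * (X:ℝ)^((1:ℝ)/B))^(B:ℕ) :=
        pow_le_pow_left₀ (by positivity) hQX B
      have h3 : ((X:ℝ)^((1:ℝ)/(B:ℝ)))^(B:ℕ) = (X:ℝ) := by
        rw [← Real.rpow_natCast ((X:ℝ)^((1:ℝ)/(B:ℝ))) B, ← Real.rpow_mul (by positivity)]
        rw [one_div, inv_mul_cancel₀ (by positivity), Real.rpow_one]
      calc (Q:ℝ)^(B:ℕ) ≤ (2 * (X:ℝ)^((1:ℝ)/B))^(B:ℕ) := h1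
        _ = 2^B * ((X:ℝ)^((1:ℝ)/(B:ℝ)))^(B:ℕ) := mul_pow _ _ _
        _ = 2^B * (X:ℝ) := by rw [h3]
    have hQεX : (0:ℝ) < (Q:ℝ)^ε := by positivity
    have hhalfsq : (Q:ℝ)^(ε/2) * (Q:ℝ)^(ε/2) = (Q:ℝ)^ε := by
      rw [← Real.rpow_add hQpos]
      norm_num
    have hQε1 : (1:ℝ) ≤ (Q:ℝ)^ε := Real.one_le_rpow hQ1 hε.le
    -- total bound on M
    have hMfinal : M ≤ (2 * Cd^B * (1 + 2*(B:ℝ)/ε) + 2^B) * (Q:ℝ)^ε * (X:ℝ) := by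
      have hf3 := hfiber.trans hstep3
      have e1 : M ≤ 2 * (X:ℝ) * (Cd^B * (N:ℝ)^(δ*(B:ℝ)) * (1 + Real.log N)) + (Q:ℝ)^(B:ℕ) := by
        refine le_trans hstep2 (add_le_add ?_ le_rfl)
        exact mul_le_mul_of_nonneg_left hf3 (by positivity)
      rw [hNδ] at e1
      have e2 : Cd^B * (Q:ℝ)^(ε/2) * (1 + Real.log N)
          ≤ Cd^B * (Q:ℝ)^(ε/2) * ((1 + 2*(B:ℝ)/ε) * (Q:ℝ)^(ε/2)) :=
        mul_le_mul_of_nonneg_left hlogbound (by positivity)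
      have e3 : Cd^B * (Q:ℝ)^(ε/2) * ((1 + 2*(B:ℝ)/ε) * (Q:ℝ)^(ε/2))
          = Cd^B * (1 + 2*(B:ℝ)/ε) * (Q:ℝ)^ε := by
        rw [← hhalfsq]; ring
      have e4 : M ≤ 2 * (X:ℝ) * (Cd^B * (1 + 2*(B:ℝ)/ε) * (Q:ℝ)^ε) + 2^B * (X:ℝ) := by
        calc M ≤ 2 * (X:ℝ) * (Cd^B * (Q:ℝ)^(ε/2) * (1 + Real.log N)) + (Q:ℝ)^(B:ℕ) := e1
          _ ≤ 2 * (X:ℝ) * (Cd^B * (1 + 2*(B:ℝ)/ε) * (Q:ℝ)^ε) + 2^B * (X:ℝ) := by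
              refine add_le_add ?_ hQB
              refine mul_le_mul_of_nonneg_left (le_trans e2 (le_of_eq e3)) (by positivity)
      have e5 : (2:ℝ)^B * (X:ℝ) ≤ 2^B * ((Q:ℝ)^ε * (X:ℝ)) := by
        have hx : (X:ℝ) ≤ (Q:ℝ)^ε * (X:ℝ) := le_mul_of_one_le_left (by positivity) hQε1
        exact mul_le_mul_of_nonneg_left hx (by positivity)
      have e6 : 2 * (X:ℝ) * (Cd^B * (1 + 2*(B:ℝ)/ε) * (Q:ℝ)^ε) + 2^B * ((Q:ℝ)^ε * (X:ℝ))
          = (2 * Cd^B * (1 + 2*(B:ℝ)/ε) + 2^B) * (Q:ℝ)^ε * (X:ℝ) := by ring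
      linarith [e4, e5]
    -- conclude
    have hDB : (0:ℝ) < (D:ℝ)^(B:ℕ) := by positivity
    have hDpow : (D:ℝ)^(-(B:ℝ)) = ((D:ℝ)^(B:ℕ))⁻¹ := by
      rw [← Real.rpow_natCast (D:ℝ) B, ← Real.rpow_neg (by positivity)]
    set Cf : ℝ := 3 + 2^B + 2 * Cd^B * (1 + 2*(B:ℝ)/ε) with hCf
    have hfin : (A.card : ℝ) ≤ (Cf * (Q:ℝ)^ε * (X:ℝ)) / (D:ℝ)^(B:ℕ) := by
      rw [le_div_iff₀ hDB]
      have h6 : (2 * Cd^B * (1 + 2*(B:ℝ)/ε) + 2^B) * (Q:ℝ)^ε * (X:ℝ)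
          ≤ Cf * (Q:ℝ)^ε * (X:ℝ) := by
        have hle : (2 * Cd^B * (1 + 2*(B:ℝ)/ε) + 2^B) ≤ Cf := by
          rw [hCf]; linarith
        exact mul_le_mul_of_nonneg_right
          (mul_le_mul_of_nonneg_right hle (le_of_lt hQεX)) (by positivity)
      exact le_trans hstep1 (hMfinal.trans h6)
    rw [hDpow]
    calc (A.card : ℝ) ≤ (Cf * (Q:ℝ)^ε * (X:ℝ)) / (D:ℝ)^(B:ℕ) := hfin
      _ = Cf * ((D:ℝ)^(B:ℕ))⁻¹ * (Q:ℝ)^ε * (X:ℝ) := by ring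
end

section
/- Let δ_{a/q} denote the Dirac measure at a/q on the torus ℝ/ℤ. For any integer Q ≥ 1 and any n ∈ ℤ, the Fourier coefficient of the measure μ = ∑_{q ∼ Q} ∑_{1 ≤ a ≤ q, gcd(a,q)=1} δ_{a/q} satisfies |μ̂(n)| = |∑_{q ∼ Q} ∑_{(a,q)=1} e(−n a/q)| ≲ Q · d(n, 2Q). -/
open Finset Real


lemma geom_lemma (n : ℤ) (m : ℕ) (hm : 1 ≤ m) :
    ∑ b ∈ Icc 1 m, Complex.exp (2 * Real.pi * Complex.I * (-(n : ℂ) * b / m))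
      = if (m : ℤ) ∣ n then (m : ℂ) else 0 := by
  have hm0 : (m : ℂ) ≠ 0 := Nat.cast_ne_zero.mpr (by omega)
  set ζ : ℂ := Complex.exp (2 * Real.pi * Complex.I * (-(n : ℂ) / m)) with hζ
  have hterm : ∀ b : ℕ, Complex.exp (2 * Real.pi * Complex.I * (-(n : ℂ) * b / m)) = ζ ^ b := by
    intro b
    rw [hζ, ← Complex.exp_nat_mul]
    ring_nf
  simp only [hterm]
  by_cases hdvd : (m : ℤ) ∣ n
  · have hζ1 : ζ = 1 := by
      obtain ⟨k, hk⟩ := hdvd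
      have : (-(n : ℂ) / m) = ((-k : ℤ) : ℂ) := by
        rw [hk]; push_cast; field_simp
      rw [hζ, this]
      rw [show 2 * (Real.pi:ℂ) * Complex.I * ((-k : ℤ) : ℂ) = ((-k : ℤ) : ℂ) * (2 * Real.pi * Complex.I) by ring]
      exact Complex.exp_int_mul_two_pi_mul_I _
    simp [hζ1, if_pos hdvd]
  · have hζm : ζ ^ m = 1 := by
      rw [hζ, ← Complex.exp_nat_mul]
      have : (m : ℂ) * (2 * Real.pi * Complex.I * (-(n : ℂ) / m)) = ((-n : ℤ) : ℂ) * (2 * Real.pi * Complex.I) := by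
        push_cast; field_simp
      rw [this]
      exact Complex.exp_int_mul_two_pi_mul_I _
    have hζ1 : ζ ≠ 1 := by
      intro h
      rw [hζ, Complex.exp_eq_one_iff] at h
      obtain ⟨k, hk⟩ := h
      have hI : (2 : ℂ) * Real.pi * Complex.I ≠ 0 := by
        simp [Real.pi_ne_zero, Complex.I_ne_zero, Complex.ofReal_ne_zero]
      have h2 : (2:ℂ) * Real.pi * Complex.I * (-(n:ℂ)) = (2:ℂ) * Real.pi * Complex.I * ((k:ℂ) * m) := by
        field_simp at hk
        linear_combination (2 * Real.pi * Complex.I) * hk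
      have h3 : -(n:ℂ) = (k:ℂ) * m := mul_left_cancel₀ hI h2
      have h4 : -n = k * m := by exact_mod_cast h3
      exact hdvd ⟨-k, by linear_combination -h4⟩
    have hsum : ∑ b ∈ Icc 1 m, ζ ^ b = ζ * ∑ b ∈ range m, ζ ^ b := by
      rw [mul_sum, show Icc 1 m = Ico 1 (m+1) by rfl, Finset.sum_Ico_eq_sum_range]
      simp [pow_add, pow_one, Nat.add_sub_cancel]
    rw [hsum, geom_sum_eq hζ1, hζm]
    simp [if_neg hdvd]

lemma moeb_ind (x : ℕ) :
    (∑ d ∈ x.divisors, ((ArithmeticFunction.moebius d : ℤ) : ℂ)) = if x = 1 then 1 else 0 := by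
  have h := congrArg (fun f => f x) ArithmeticFunction.moebius_mul_coe_zeta
  simp only [ArithmeticFunction.coe_mul_zeta_apply, ArithmeticFunction.one_apply] at h
  rw [← Int.cast_sum, h]
  split <;> simp

lemma divisors_gcd_eq (a q : ℕ) (hq : q ≠ 0) :
    (Nat.gcd a q).divisors = q.divisors.filter (· ∣ a) := by
  ext d
  simp only [Nat.mem_divisors, Finset.mem_filter, Nat.dvd_gcd_iff]
  constructor
  · rintro ⟨⟨h1, h2⟩, -⟩; exact ⟨⟨h2, hq⟩, h1⟩
  · rintro ⟨⟨h2, -⟩, h1⟩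
    exact ⟨⟨h1, h2⟩, Nat.ne_of_gt (Nat.gcd_pos_of_pos_right a (Nat.pos_of_ne_zero hq))⟩

lemma ram_eq (n : ℤ) (q : ℕ) (hq : 1 ≤ q) :
    ∑ a ∈ (Finset.Icc 1 q).filter (fun a => Nat.gcd a q = 1),
        Complex.exp (2 * Real.pi * Complex.I * (-(n : ℂ) * a / q))
      = ∑ d ∈ q.divisors, ((ArithmeticFunction.moebius d : ℤ) : ℂ) *
          (if ((q / d : ℕ) : ℤ) ∣ n then ((q / d : ℕ) : ℂ) else 0) := by
  have hq0 : q ≠ 0 := by omega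
  rw [Finset.sum_filter]
  have step1 : ∀ a ∈ Finset.Icc 1 q,
      (if Nat.gcd a q = 1 then Complex.exp (2 * Real.pi * Complex.I * (-(n : ℂ) * a / q)) else 0)
        = ∑ d ∈ q.divisors, (if d ∣ a then ((ArithmeticFunction.moebius d : ℤ) : ℂ) *
            Complex.exp (2 * Real.pi * Complex.I * (-(n : ℂ) * a / q)) else 0) := by
    intro a _
    rw [← Finset.sum_filter, ← divisors_gcd_eq a q hq0, ← Finset.sum_mul, moeb_ind]
    split <;> simp
  rw [Finset.sum_congr rfl step1, Finset.sum_comm]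
  refine Finset.sum_congr rfl fun d hd => ?_
  obtain ⟨hdq, -⟩ := Nat.mem_divisors.mp hd
  have hd0 : d ≠ 0 := by rintro rfl; simp [Nat.zero_dvd] at hdq; omega
  set m := q / d with hm
  have hdm : d * m = q := Nat.mul_div_cancel' hdq
  have hm1 : 1 ≤ m := by
    rcases Nat.eq_zero_or_pos m with h | h
    · rw [h, Nat.mul_zero] at hdm; omega
    · exact h
  rw [← Finset.sum_filter, ← Finset.mul_sum]
  congr 1
  rw [← geom_lemma n m hm1]
  refine Finset.sum_nbij' (fun a => a / d) (fun b => d * b) ?_ ?_ ?_ ?_ ?_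
  · intro a ha
    simp only [Finset.mem_filter, Finset.mem_Icc] at ha ⊢
    obtain ⟨⟨h1, h2⟩, h3⟩ := ha
    exact ⟨(Nat.one_le_div_iff (by omega)).mpr (Nat.le_of_dvd (by omega) h3),
      Nat.div_le_div_right h2⟩
  · intro b hb
    simp only [Finset.mem_Icc] at hb
    rw [Finset.mem_filter, Finset.mem_Icc]
    refine ⟨⟨Nat.one_le_iff_ne_zero.mpr (Nat.mul_ne_zero hd0 (by omega)), ?_⟩, Dvd.intro b rfl⟩
    calc d * b ≤ d * m := Nat.mul_le_mul_left d hb.2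
    _ = q := hdm
  · intro a ha
    simp only [Finset.mem_filter] at ha
    exact Nat.mul_div_cancel' ha.2
  · intro b _
    exact Nat.mul_div_cancel_left b (by omega)
  · intro a ha
    simp only [Finset.mem_filter, Finset.mem_Icc] at ha
    obtain ⟨⟨h1, h2⟩, b, rfl⟩ := ha
    have hdpos : 0 < d := Nat.pos_of_ne_zero hd0
    show Complex.exp (2 * Real.pi * Complex.I * (-(n : ℂ) * ((d * b : ℕ) : ℂ) / q))
      = Complex.exp (2 * Real.pi * Complex.I * (-(n : ℂ) * (((d * b) / d : ℕ) : ℂ) / m))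
    rw [Nat.mul_div_cancel_left b hdpos]
    congr 1
    have hdc : (d : ℂ) ≠ 0 := Nat.cast_ne_zero.mpr hd0
    have hmc : (m : ℂ) ≠ 0 := Nat.cast_ne_zero.mpr (by omega)
    have hqc : (q : ℂ) = d * m := by exact_mod_cast hdm.symm
    push_cast
    rw [hqc]
    field_simp

lemma ram_bound (n : ℤ) (q : ℕ) (hq : 1 ≤ q) :
    ‖∑ a ∈ (Finset.Icc 1 q).filter (fun a => Nat.gcd a q = 1),
        Complex.exp (2 * Real.pi * Complex.I * (-(n : ℂ) * a / q))‖
      ≤ ∑ e ∈ q.divisors.filter (fun e : ℕ => (e : ℤ) ∣ n), (e : ℝ) := by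
  rw [ram_eq n q hq]
  refine (norm_sum_le _ _).trans ?_
  have : ∀ d ∈ q.divisors,
      ‖((ArithmeticFunction.moebius d : ℤ) : ℂ) *
        (if ((q / d : ℕ) : ℤ) ∣ n then ((q / d : ℕ) : ℂ) else 0)‖
      ≤ (if ((q / d : ℕ) : ℤ) ∣ n then ((q / d : ℕ) : ℝ) else 0) := by
    intro d _
    rw [norm_mul]
    have h1 : ‖((ArithmeticFunction.moebius d : ℤ) : ℂ)‖ ≤ 1 := by
      rw [Complex.norm_intCast]
      exact_mod_cast ArithmeticFunction.abs_moebius_le_one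
    have h2 : ‖(if ((q / d : ℕ) : ℤ) ∣ n then ((q / d : ℕ) : ℂ) else 0)‖
        = (if ((q / d : ℕ) : ℤ) ∣ n then ((q / d : ℕ) : ℝ) else 0) := by
      rw [apply_ite (fun z : ℂ => ‖z‖), norm_zero, Complex.norm_natCast]
    rw [h2]
    refine mul_le_of_le_one_left ?_ h1
    split <;> positivity
  refine (Finset.sum_le_sum this).trans ?_
  rw [Nat.sum_div_divisors q (fun e : ℕ => if (e : ℤ) ∣ n then (e : ℝ) else 0), Finset.sum_filter]

/-- Bourgain's divisor bound for the Fourier coefficients of the sum of Dirac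
measures at reduced fractions `a/q` with `Q ≤ q < 2Q`:
`|∑_{q ∼ Q} ∑_{(a,q)=1} e(-n a/q)| ≲ Q · d(n, 2Q)`. -/
theorem stmt_2 :
    ∃ C : ℝ, 0 < C ∧ ∀ Q : ℕ, 1 ≤ Q → ∀ n : ℤ,
      ‖∑ q ∈ Finset.Ico Q (2 * Q),
          ∑ a ∈ (Finset.Icc 1 q).filter (fun a => Nat.gcd a q = 1),
            Complex.exp (2 * Real.pi * Complex.I * (-(n : ℂ) * a / q))‖
        ≤ C * (Q : ℝ) * (((Finset.Icc (1 : ℤ) (2 * (Q : ℤ))).filter (fun d => d ∣ n)).card : ℝ) := by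
  refine ⟨2, by norm_num, fun Q hQ n => ?_⟩
  set Dn : Finset ℕ := (Finset.Icc 1 (2 * Q)).filter (fun e : ℕ => (e : ℤ) ∣ n) with hDn
  have hcard : (Dn.card : ℝ)
      ≤ (((Finset.Icc (1 : ℤ) (2 * (Q : ℤ))).filter (fun d => d ∣ n)).card : ℝ) := by
    have : Dn.card ≤ ((Finset.Icc (1 : ℤ) (2 * (Q : ℤ))).filter (fun d => d ∣ n)).card := by
      refine Finset.card_le_card_of_injOn (fun e => (e : ℤ)) ?_ ?_
      · intro e he
        simp only [hDn, Finset.coe_filter, Finset.mem_coe, Finset.mem_filter, Finset.mem_Icc] at he ⊢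
        exact ⟨⟨by exact_mod_cast he.1.1, by exact_mod_cast he.1.2⟩, he.2⟩
      · intro a _ b _ h
        exact Nat.cast_injective h
    exact_mod_cast this
  calc ‖∑ q ∈ Finset.Ico Q (2 * Q),
          ∑ a ∈ (Finset.Icc 1 q).filter (fun a => Nat.gcd a q = 1),
            Complex.exp (2 * Real.pi * Complex.I * (-(n : ℂ) * a / q))‖
      ≤ ∑ q ∈ Finset.Ico Q (2 * Q),
          ‖∑ a ∈ (Finset.Icc 1 q).filter (fun a => Nat.gcd a q = 1),
            Complex.exp (2 * Real.pi * Complex.I * (-(n : ℂ) * a / q))‖ := norm_sum_le _ _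
    _ ≤ ∑ q ∈ Finset.Ico Q (2 * Q),
          ∑ e ∈ q.divisors.filter (fun e : ℕ => (e : ℤ) ∣ n), (e : ℝ) := by
        refine Finset.sum_le_sum fun q hq => ram_bound n q ?_
        rw [Finset.mem_Ico] at hq; omega
    _ = ∑ q ∈ Finset.Ico Q (2 * Q), ∑ e ∈ Dn, (if e ∣ q then (e : ℝ) else 0) := by
        refine Finset.sum_congr rfl fun q hq => ?_
        rw [Finset.mem_Ico] at hq
        rw [← Finset.sum_filter]
        congr 1
        ext e
        simp only [hDn, Finset.mem_filter, Nat.mem_divisors, Finset.mem_Icc, Finset.filter_filter]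
        constructor
        · rintro ⟨⟨h1, h2⟩, h3⟩
          exact ⟨⟨Nat.one_le_iff_ne_zero.mpr (by rintro rfl; simp [Nat.zero_dvd] at h1; omega),
            (Nat.le_of_dvd (by omega) h1).trans (by omega)⟩, h3, h1⟩
        · rintro ⟨⟨h1, h2⟩, h3, h4⟩
          exact ⟨⟨h4, by omega⟩, h3⟩
    _ = ∑ e ∈ Dn, ∑ q ∈ Finset.Ico Q (2 * Q), (if e ∣ q then (e : ℝ) else 0) := Finset.sum_comm
    _ ≤ ∑ e ∈ Dn, (2 * Q : ℝ) := by
        refine Finset.sum_le_sum fun e he => ?_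
        simp only [hDn, Finset.mem_filter, Finset.mem_Icc] at he
        have he1 : 1 ≤ e := he.1.1
        rw [← Finset.sum_filter, Finset.sum_const, nsmul_eq_mul]
        have hsub : (Finset.Ico Q (2 * Q)).filter (fun q => e ∣ q)
            ⊆ (Finset.Ioc 0 (2 * Q - 1)).filter (fun q => e ∣ q) := by
          refine Finset.filter_subset_filter _ ?_
          intro q hq
          rw [Finset.mem_Ico] at hq
          rw [Finset.mem_Ioc]
          omega
        have hc : ((Finset.Ico Q (2 * Q)).filter (fun q => e ∣ q)).card ≤ (2 * Q - 1) / e :=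
          (Finset.card_le_card hsub).trans (le_of_eq (Nat.Ioc_filter_dvd_card_eq_div (2 * Q - 1) e))
        have : (((Finset.Ico Q (2 * Q)).filter (fun q => e ∣ q)).card : ℝ) * (e : ℝ)
            ≤ (((2 * Q - 1) / e : ℕ) : ℝ) * (e : ℝ) :=
          mul_le_mul_of_nonneg_right (by exact_mod_cast hc) (by positivity)
        refine this.trans ?_
        have h2 : ((2 * Q - 1) / e) * e ≤ 2 * Q := (Nat.div_mul_le_self _ _).trans (by omega)
        calc (((2 * Q - 1) / e : ℕ) : ℝ) * (e : ℝ) = ((((2 * Q - 1) / e) * e : ℕ) : ℝ) := by push_cast; ring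
          _ ≤ ((2 * Q : ℕ) : ℝ) := by exact_mod_cast h2
          _ = (2 * Q : ℝ) := by push_cast; ring
    _ = (2 * Q : ℝ) * Dn.card := by rw [Finset.sum_const, nsmul_eq_mul]; ring
    _ ≤ 2 * (Q : ℝ) * (((Finset.Icc (1 : ℤ) (2 * (Q : ℤ))).filter (fun d => d ∣ n)).card : ℝ) := by
        have hQ0 : (0:ℝ) ≤ 2 * Q := by positivity
        calc (2 * Q : ℝ) * Dn.card ≤ (2 * Q : ℝ) * _ := mul_le_mul_of_nonneg_left hcard hQ0
          _ = 2 * (Q : ℝ) * _ := by ring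
end
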